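/- Fix $\alpha < 1$ and $\lambda \geq 0$, and let $\hat{C}$ be a $p\times p$ symmetric matrix with unit diagonal. For each fixed diagonal matrix $D$ with positive entries, the map $R \mapsto -\log\det(R) - 2(1-\alpha)\log\det(D) + \operatorname{tr}(\hat{C}DRD) + \lambda\sum_{i\neq j}|R_{ij}|$ is strictly convex on the set of positive definite matrices with unit diagonal. Moreover, if $\hat{C}$ is additionally positive semidefinite, then for each fixed positive definite $R$ with unit diagonal, the map $D \mapsto$ (same expression) is strictly convex on the set of diagonal matrices with positive entries. Hence the objective is strictly biconvex. -/

import Mathlib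

open Matrix

open Real

variable {p : ℕ}



lemma myPosDef_smul {M : Matrix (Fin p) (Fin p) ℝ} (hM : M.PosDef) {a : ℝ} (ha : 0 < a) :
    (a • M).PosDef := by
  refine posDef_iff_dotProduct_mulVec.mpr ⟨?_, fun x hx => ?_⟩
  · unfold Matrix.IsHermitian
    rw [conjTranspose_smul, hM.1]
    simp
  · rw [smul_mulVec, dotProduct_smul]
    exact mul_pos ha (hM.dotProduct_mulVec_pos hx)

lemma myPosDef_conj {B N : Matrix (Fin p) (Fin p) ℝ} (hB : B.PosDef)
    (hN : IsUnit N.det) : (Nᴴ * B * N).PosDef := by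
  refine posDef_iff_dotProduct_mulVec.mpr ⟨isHermitian_conjTranspose_mul_mul N hB.1, fun x hx => ?_⟩
  have hx' : N *ᵥ x ≠ 0 :=
    ((Matrix.mulVec_injective_iff_isUnit.mpr (isUnit_iff_isUnit_det N |>.2 hN)).ne_iff'
      (by simp)).2 hx
  simpa only [star_mulVec, dotProduct_mulVec, vecMul_vecMul] using hB.dotProduct_mulVec_pos hx'

lemma det_smul_one_add_smul {M : Matrix (Fin p) (Fin p) ℝ} (hM : M.PosDef) (a b : ℝ) :
    (a • (1 : Matrix (Fin p) (Fin p) ℝ) + b • M).det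
      = ∏ i, (a + b * hM.1.eigenvalues i) := by
  have hU : (hM.1.eigenvectorUnitary : Matrix (Fin p) (Fin p) ℝ) *
      (star hM.1.eigenvectorUnitary : Matrix (Fin p) (Fin p) ℝ) = 1 :=
    (Matrix.mem_unitaryGroup_iff).mp hM.1.eigenvectorUnitary.2
  have hsp := hM.1.spectral_theorem
  rw [Unitary.conjStarAlgAut_apply] at hsp
  set U : Matrix (Fin p) (Fin p) ℝ := (hM.1.eigenvectorUnitary : Matrix (Fin p) (Fin p) ℝ)
    with hUdef
  have hdg : diagonal (fun i => a + b * hM.1.eigenvalues i)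
      = a • (1 : Matrix (Fin p) (Fin p) ℝ)
        + b • diagonal (RCLike.ofReal ∘ hM.1.eigenvalues) := by
    ext i j
    by_cases h : i = j <;>
      simp [h, Matrix.one_apply, Matrix.diagonal_apply, mul_comm]
  have key : a • (1 : Matrix (Fin p) (Fin p) ℝ) + b • M
      = U * (diagonal (fun i => a + b * hM.1.eigenvalues i)) * star U := by
    rw [hdg, mul_add, add_mul, Matrix.mul_smul, Matrix.smul_mul, mul_one, hU,
      Matrix.mul_smul, Matrix.smul_mul, ← hsp]
  have h1 : (star U).det * U.det = 1 := by rw [mul_comm, ← det_mul, hU, det_one]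
  rw [key, det_mul, det_mul, mul_comm, ← mul_assoc, h1, one_mul, det_diagonal]

lemma eq_one_of_eigenvalues_one {M : Matrix (Fin p) (Fin p) ℝ} (hM : M.IsHermitian)
    (h : ∀ i, hM.eigenvalues i = 1) : M = 1 := by
  have hU : (hM.eigenvectorUnitary : Matrix (Fin p) (Fin p) ℝ) *
      (star hM.eigenvectorUnitary : Matrix (Fin p) (Fin p) ℝ) = 1 :=
    (Matrix.mem_unitaryGroup_iff).mp hM.eigenvectorUnitary.2
  have hd : diagonal (RCLike.ofReal ∘ hM.eigenvalues) = (1 : Matrix (Fin p) (Fin p) ℝ) := by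
    ext i j
    by_cases hij : i = j <;> simp [hij, h, Matrix.one_apply, Matrix.diagonal_apply]
  rw [hM.spectral_theorem, Unitary.conjStarAlgAut_apply, hd, mul_one, hU]

open scoped MatrixOrder in
lemma mySqrt {A : Matrix (Fin p) (Fin p) ℝ} (hA : A.PosSemidef) :
    ∃ S : Matrix (Fin p) (Fin p) ℝ, S.PosSemidef ∧ S * S = A :=
  ⟨CFC.sqrt A, Matrix.nonneg_iff_posSemidef.mp (CFC.sqrt_nonneg A),
    CFC.sqrt_mul_sqrt_self A hA.nonneg⟩

lemma logdet_strict {A B : Matrix (Fin p) (Fin p) ℝ} (hA : A.PosDef) (hB : B.PosDef)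
    (hne : A ≠ B) {a b : ℝ} (ha : 0 < a) (hb : 0 < b) (hab : a + b = 1) :
    a * Real.log A.det + b * Real.log B.det < Real.log (a • A + b • B).det := by
  classical
  -- square root of A
  have hAps := hA.posSemidef
  obtain ⟨S, hSps, hSS⟩ := mySqrt hAps
  have hdetS : S.det * S.det = A.det := by rw [← det_mul, hSS]
  have hdetSnn : 0 ≤ S.det := by
    rw [hSps.isHermitian.det_eq_prod_eigenvalues]
    exact Finset.prod_nonneg fun i _ => by simpa using hSps.eigenvalues_nonneg i
  have hdetSpos : 0 < S.det := by
    rcases hdetSnn.lt_or_eq with h | h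
    · exact h
    · exfalso; nlinarith [hA.det_pos]
  have hSunit : IsUnit S.det := hdetSpos.ne'.isUnit
  have hSinv : S⁻¹ * S = 1 := Matrix.nonsing_inv_mul S hSunit
  have hSinv' : S * S⁻¹ = 1 := Matrix.mul_nonsing_inv S hSunit
  have hSinvH : (S⁻¹)ᴴ = S⁻¹ := by
    rw [Matrix.conjTranspose_nonsing_inv, hSps.isHermitian]
  -- M := S⁻¹ B S⁻¹
  set M := S⁻¹ * B * S⁻¹ with hMdef
  have hMpd : M.PosDef := by
    have := myPosDef_conj (N := S⁻¹) hB (by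
      have := hSunit
      simpa using (Matrix.isUnit_nonsing_inv_det S this))
    rwa [hSinvH] at this
  have h2 : S * M * S = B := by
    rw [hMdef, show S * (S⁻¹ * B * S⁻¹) * S = (S * S⁻¹) * (B * (S⁻¹ * S)) by
      simp only [mul_assoc], hSinv, hSinv', one_mul, mul_one]
  have hMne : M ≠ 1 := by
    intro h
    apply hne
    rw [← h2, h, mul_one, hSS]
  -- factorization
  have hfact : a • A + b • B = S * (a • (1 : Matrix (Fin p) (Fin p) ℝ) + b • M) * S := by
    rw [mul_add, add_mul, Matrix.mul_smul, Matrix.smul_mul, mul_one, hSS,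
      Matrix.mul_smul, Matrix.smul_mul, h2]
  set μ := hMpd.1.eigenvalues with hμdef
  have hμpos : ∀ i, 0 < μ i := hMpd.eigenvalues_pos
  have hdet1 : (a • (1 : Matrix (Fin p) (Fin p) ℝ) + b • M).det = ∏ i, (a + b * μ i) :=
    det_smul_one_add_smul hMpd a b
  have hdetM : M.det = ∏ i, μ i := by
    rw [hMpd.1.det_eq_prod_eigenvalues]; norm_num; congr
  have hdetMA : M.det = B.det / A.det := by
    have hiv : S⁻¹.det = S.det⁻¹ := by
      rw [Matrix.det_nonsing_inv, Ring.inverse_eq_inv']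
    rw [hMdef, det_mul, det_mul, hiv, ← hdetS]
    field_simp
  -- strict concavity of log termwise
  obtain ⟨i0, hi0⟩ : ∃ i, μ i ≠ 1 := by
    by_contra h
    push_neg at h
    exact hMne (eq_one_of_eigenvalues_one hMpd.1 h)
  have hterm : ∀ i, b * Real.log (μ i) ≤ Real.log (a + b * μ i) := by
    intro i
    have := strictConcaveOn_log_Ioi.concaveOn.2 (Set.mem_Ioi.mpr one_pos)
      (Set.mem_Ioi.mpr (hμpos i)) ha.le hb.le hab
    simpa [Real.log_one, smul_eq_mul] using this
  have hterm0 : b * Real.log (μ i0) < Real.log (a + b * μ i0) := by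
    have := strictConcaveOn_log_Ioi.2 (Set.mem_Ioi.mpr one_pos)
      (Set.mem_Ioi.mpr (hμpos i0)) (Ne.symm hi0) ha hb hab
    simpa [Real.log_one, smul_eq_mul] using this
  have hsum : b * Real.log M.det < Real.log ((a • (1 : Matrix (Fin p) (Fin p) ℝ) + b • M).det) := by
    rw [hdet1, hdetM, Real.log_prod (fun i _ => (hμpos i).ne'),
      Real.log_prod (fun i _ => by have := hμpos i; positivity), Finset.mul_sum]
    exact Finset.sum_lt_sum (fun i _ => hterm i) ⟨i0, Finset.mem_univ i0, hterm0⟩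
  have hdetcomb : (a • A + b • B).det
      = A.det * (a • (1 : Matrix (Fin p) (Fin p) ℝ) + b • M).det := by
    rw [hfact, det_mul, det_mul]
    rw [mul_comm, ← mul_assoc, mul_comm S.det, hdetS]
  have hNpos : 0 < (a • (1 : Matrix (Fin p) (Fin p) ℝ) + b • M).det := by
    rw [hdet1]
    exact Finset.prod_pos fun i _ => by have := hμpos i; positivity
  rw [hdetcomb, Real.log_mul hA.det_pos.ne' hNpos.ne']
  have hlogM : Real.log M.det = Real.log B.det - Real.log A.det := by
    rw [hdetMA, Real.log_div hB.det_pos.ne' hA.det_pos.ne']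
  rw [hlogM] at hsum
  have hb' : a = 1 - b := by linarith
  have e : a * Real.log A.det = Real.log A.det - b * Real.log A.det := by rw [hb']; ring
  linarith [hsum]

lemma myConvexOn_sum {ι E : Type*} [AddCommMonoid E] [Module ℝ E] {s : Set E}
    (hs : Convex ℝ s) (t : Finset ι) (f : ι → E → ℝ)
    (h : ∀ i ∈ t, ConvexOn ℝ s (f i)) : ConvexOn ℝ s (fun x => ∑ i ∈ t, f i x) := by
  classical
  induction t using Finset.induction_on with
  | empty => simpa using convexOn_const 0 hs
  | insert _ _ hnot ih =>
      simp_rw [Finset.sum_insert hnot]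
      exact (h _ (Finset.mem_insert_self _ _)).add
        (ih fun i hi => h i (Finset.mem_insert_of_mem hi))

lemma myConvexOn_abs : ConvexOn ℝ (Set.univ : Set ℝ) (fun x => |x|) := by
  refine ⟨convex_univ, fun x _ y _ a b ha hb hab => ?_⟩
  simp only [smul_eq_mul]
  calc |a * x + b * y| ≤ |a * x| + |b * y| := abs_add_le _ _
    _ = a * |x| + b * |y| := by rw [abs_mul, abs_mul, abs_of_nonneg ha, abs_of_nonneg hb]

def entryLM (i j : Fin p) : Matrix (Fin p) (Fin p) ℝ →ₗ[ℝ] ℝ where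
  toFun R := R i j
  map_add' _ _ := rfl
  map_smul' _ _ := rfl

lemma convex_s1 : Convex ℝ {R : Matrix (Fin p) (Fin p) ℝ | R.PosDef ∧ ∀ i, R i i = 1} := by
  intro x hx y hy a b ha hb hab
  constructor
  · rcases ha.lt_or_eq with ha' | ha'
    · rcases hb.lt_or_eq with hb' | hb'
      · exact (myPosDef_smul hx.1 ha').add (myPosDef_smul hy.1 hb')
      · have : a = 1 := by linarith
        simpa [this, ← hb'] using hx.1
    · have : b = 1 := by linarith
      simpa [this, ← ha'] using hy.1
  · intro i
    have h1 := hx.2 i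
    have h2 := hy.2 i
    simp only [Matrix.add_apply, Matrix.smul_apply, smul_eq_mul, h1, h2, mul_one]
    linarith

lemma strict_neglogdet {s : Set (Matrix (Fin p) (Fin p) ℝ)} (hs : Convex ℝ s)
    (hsub : ∀ R ∈ s, R.PosDef) :
    StrictConvexOn ℝ s (fun R => -Real.log R.det) := by
  refine ⟨hs, fun x hx y hy hxy a b ha hb hab => ?_⟩
  have := logdet_strict (hsub x hx) (hsub y hy) hxy ha hb hab
  simp only [smul_eq_mul]
  linarith

lemma convexOn_traceform {s : Set (Matrix (Fin p) (Fin p) ℝ)} (hs : Convex ℝ s)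
    (P Q : Matrix (Fin p) (Fin p) ℝ) :
    ConvexOn ℝ s (fun R => Matrix.trace (P * R * Q)) := by
  refine ⟨hs, fun x _ y _ a b _ _ _ => le_of_eq ?_⟩
  simp [mul_add, add_mul, Matrix.mul_smul, Matrix.smul_mul, trace_add, trace_smul, smul_eq_mul]

lemma convexOn_absentry {s : Set (Matrix (Fin p) (Fin p) ℝ)} (hs : Convex ℝ s) (i j : Fin p) :
    ConvexOn ℝ s (fun R => if i = j then 0 else |R i j|) := by
  by_cases h : i = j
  · simpa [h] using convexOn_const (0 : ℝ) hs
  · have h1 := (myConvexOn_abs.comp_linearMap (entryLM (p := p) i j)).subset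
      (by intro x _; simp) hs
    simp only [h, ↓reduceIte]
    exact h1

lemma part1 (α l : ℝ) (hα : α < 1) (hl : 0 ≤ l)
    (C : Matrix (Fin p) (Fin p) ℝ) (d : Fin p → ℝ) :
    StrictConvexOn ℝ
        {R : Matrix (Fin p) (Fin p) ℝ | R.PosDef ∧ ∀ i, R i i = 1}
        (fun R =>
          -Real.log R.det - 2 * (1 - α) * Real.log ((Matrix.diagonal d).det)
            + Matrix.trace (C * Matrix.diagonal d * R * Matrix.diagonal d)
            + l * ∑ i, ∑ j, (if i = j then 0 else |R i j|)) := by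
  set s := {R : Matrix (Fin p) (Fin p) ℝ | R.PosDef ∧ ∀ i, R i i = 1} with hsdef
  have hs : Convex ℝ s := convex_s1
  have hstrict : StrictConvexOn ℝ s (fun R => -Real.log R.det) :=
    strict_neglogdet hs (fun R hR => hR.1)
  have habs : ConvexOn ℝ s
      (fun R => ∑ i, ∑ j, (if i = j then (0:ℝ) else |R i j|)) :=
    myConvexOn_sum hs Finset.univ _ (fun i _ =>
      myConvexOn_sum hs Finset.univ _ (fun j _ => convexOn_absentry hs i j))
  have habs' : ConvexOn ℝ s
      (fun R => l * ∑ i, ∑ j, (if i = j then (0:ℝ) else |R i j|)) := by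
    have := habs.smul hl
    simpa [Pi.smul_def, smul_eq_mul] using this
  have hconv : ConvexOn ℝ s
      (fun R => - 2 * (1 - α) * Real.log ((Matrix.diagonal d).det)
        + Matrix.trace (C * Matrix.diagonal d * R * Matrix.diagonal d)
        + l * ∑ i, ∑ j, (if i = j then (0:ℝ) else |R i j|)) :=
    ((convexOn_const _ hs).add (convexOn_traceform hs (C * Matrix.diagonal d)
      (Matrix.diagonal d))).add habs'
  have h := hstrict.add_convexOn hconv
  have hfun : (fun R : Matrix (Fin p) (Fin p) ℝ =>
      -Real.log R.det - 2 * (1 - α) * Real.log ((Matrix.diagonal d).det)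
        + Matrix.trace (C * Matrix.diagonal d * R * Matrix.diagonal d)
        + l * ∑ i, ∑ j, (if i = j then (0:ℝ) else |R i j|))
      = (fun R => -Real.log R.det) + (fun R =>
        - 2 * (1 - α) * Real.log ((Matrix.diagonal d).det)
        + Matrix.trace (C * Matrix.diagonal d * R * Matrix.diagonal d)
        + l * ∑ i, ∑ j, (if i = j then (0:ℝ) else |R i j|)) := by
    funext R
    simp only [Pi.add_apply]
    ring
  rw [hfun]
  exact h

lemma convex_s2 : Convex ℝ {d : Fin p → ℝ | ∀ i, 0 < d i} := by
  intro x hx y hy a b ha hb hab i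
  simp only [Pi.add_apply, Pi.smul_apply, smul_eq_mul]
  rcases ha.lt_or_eq with ha' | ha'
  · have : 0 ≤ b * y i := mul_nonneg hb (hy i).le
    nlinarith [hx i]
  · have hb1 : b = 1 := by linarith
    rw [← ha', hb1]
    simpa using hy i

lemma strict_neglogdiag (c : ℝ) (hc : 0 < c) :
    StrictConvexOn ℝ {d : Fin p → ℝ | ∀ i, 0 < d i}
      (fun d => -(c * Real.log ((Matrix.diagonal d).det))) := by
  have hlog : ∀ v : Fin p → ℝ, (∀ i, 0 < v i) →
      Real.log ((Matrix.diagonal v).det) = ∑ i, Real.log (v i) := by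
    intro v hv
    rw [det_diagonal, Real.log_prod fun i _ => (hv i).ne']
  refine ⟨convex_s2, fun x hx y hy hxy a b ha hb hab => ?_⟩
  have hcomb : ∀ i, 0 < (a • x + b • y) i :=
    convex_s2 hx hy ha.le hb.le hab
  have hentry : ∀ i : Fin p, (a • x + b • y) i = a * x i + b * y i := fun i => rfl
  obtain ⟨i0, hi0⟩ := Function.ne_iff.mp hxy
  have hterm : ∀ i : Fin p,
      a * Real.log (x i) + b * Real.log (y i) ≤ Real.log (a * x i + b * y i) := by
    intro i
    have := strictConcaveOn_log_Ioi.concaveOn.2 (Set.mem_Ioi.mpr (hx i))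
      (Set.mem_Ioi.mpr (hy i)) ha.le hb.le hab
    simpa [smul_eq_mul] using this
  have hterm0 : a * Real.log (x i0) + b * Real.log (y i0)
      < Real.log (a * x i0 + b * y i0) := by
    have := strictConcaveOn_log_Ioi.2 (Set.mem_Ioi.mpr (hx i0))
      (Set.mem_Ioi.mpr (hy i0)) hi0 ha hb hab
    simpa [smul_eq_mul] using this
  have hsum : ∑ i, (a * Real.log (x i) + b * Real.log (y i))
      < ∑ i, Real.log (a * x i + b * y i) :=
    Finset.sum_lt_sum (fun i _ => hterm i) ⟨i0, Finset.mem_univ i0, hterm0⟩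
  have hsum' : a * ∑ i, Real.log (x i) + b * ∑ i, Real.log (y i)
      < ∑ i, Real.log (a * x i + b * y i) := by
    rw [Finset.mul_sum, Finset.mul_sum, ← Finset.sum_add_distrib]
    exact hsum
  have hc1 : Real.log ((Matrix.diagonal (a • x + b • y)).det)
      = ∑ i, Real.log (a * x i + b * y i) := by
    rw [hlog _ hcomb]
    exact Finset.sum_congr rfl fun i _ => by rw [hentry]
  simp only [smul_eq_mul]
  rw [hc1, hlog x hx, hlog y hy]
  nlinarith [hsum', hc]

def coefLM (u v : Fin p → ℝ) : (Fin p → ℝ) →ₗ[ℝ] ℝ where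
  toFun d := ∑ k, u k * d k * v k
  map_add' d e := by
    simp only [Pi.add_apply, mul_add, add_mul]
    rw [← Finset.sum_add_distrib]
  map_smul' c d := by
    simp only [Pi.smul_apply, smul_eq_mul, RingHom.id_apply, Finset.mul_sum]
    exact Finset.sum_congr rfl fun k _ => by ring

lemma convexOn_quad {C R : Matrix (Fin p) (Fin p) ℝ} (hC : C.PosSemidef)
    (hR : R.PosDef) :
    ConvexOn ℝ {d : Fin p → ℝ | ∀ i, 0 < d i}
      (fun d => Matrix.trace (C * Matrix.diagonal d * R * Matrix.diagonal d)) := by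
  classical
  obtain ⟨Bc, hBc⟩ : ∃ B : Matrix (Fin p) (Fin p) ℝ, C = Bᴴ * B :=
    let ⟨S, h1, h2⟩ := mySqrt hC; ⟨S, by rw [h1.isHermitian.eq, h2]⟩
  have hRps := hR.posSemidef
  obtain ⟨S, hSS, hSH⟩ : ∃ S : Matrix (Fin p) (Fin p) ℝ, S * S = R ∧ Sᴴ = S :=
    let ⟨S, h1, h2⟩ := mySqrt hRps; ⟨S, h2, h1.isHermitian⟩
  have key : ∀ d : Fin p → ℝ,
      Matrix.trace (C * Matrix.diagonal d * R * Matrix.diagonal d)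
        = ∑ j, ∑ i, (∑ k, Bc i k * d k * S k j) ^ 2 := by
    intro d
    have hNdef : ∃ N : Matrix (Fin p) (Fin p) ℝ, N = Bc * Matrix.diagonal d * S :=
      ⟨_, rfl⟩
    obtain ⟨N, hNdef⟩ := hNdef
    have hDH : (Matrix.diagonal d)ᴴ = Matrix.diagonal d := by
      rw [diagonal_conjTranspose]
      simp
    have hNH : Nᴴ = S * (Matrix.diagonal d * Bcᴴ) := by
      rw [hNdef, conjTranspose_mul, conjTranspose_mul, hSH, hDH]
    have e1 : C * Matrix.diagonal d * R * Matrix.diagonal d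
        = Bcᴴ * (Bc * Matrix.diagonal d * S * (S * Matrix.diagonal d)) := by
      rw [hBc, ← hSS]; simp only [mul_assoc]
    have e2 : Nᴴ * N = (S * (Matrix.diagonal d * Bcᴴ)) * (Bc * Matrix.diagonal d * S) := by
      rw [hNH, hNdef]
    have e12 : Matrix.trace (C * Matrix.diagonal d * R * Matrix.diagonal d)
        = Matrix.trace (Nᴴ * N) := by
      rw [e1, trace_mul_comm, e2,
        trace_mul_comm (S * (Matrix.diagonal d * Bcᴴ)) (Bc * Matrix.diagonal d * S)]
      congr 1
      simp only [mul_assoc]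
    have e3 : Matrix.trace (Nᴴ * N) = ∑ j, ∑ i, (N i j) ^ 2 := by
      simp [Matrix.trace, Matrix.mul_apply, Matrix.conjTranspose_apply, sq, Matrix.diag]
    have e4 : ∀ i j, N i j = ∑ k, Bc i k * d k * S k j := by
      intro i j
      rw [hNdef, Matrix.mul_apply]
      exact Finset.sum_congr rfl fun k _ => by rw [Matrix.mul_diagonal]
    rw [e12, e3]
    exact Finset.sum_congr rfl fun j _ => Finset.sum_congr rfl fun i _ => by rw [e4]
  have hconv : ConvexOn ℝ {d : Fin p → ℝ | ∀ i, 0 < d i}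
      (fun d => ∑ j, ∑ i, (∑ k, Bc i k * d k * S k j) ^ 2) := by
    refine myConvexOn_sum convex_s2 Finset.univ _ (fun j _ =>
      myConvexOn_sum convex_s2 Finset.univ _ (fun i _ => ?_))
    have h1 := ((Even.convexOn_pow (even_two (α := ℕ)) :
        ConvexOn ℝ (Set.univ : Set ℝ) fun x : ℝ => x ^ 2).comp_linearMap
        (coefLM (fun k => Bc i k) (fun k => S k j))).subset
      (by intro x _; simp) convex_s2
    exact h1
  have hfun : (fun d : Fin p → ℝ =>
      Matrix.trace (C * Matrix.diagonal d * R * Matrix.diagonal d))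
      = fun d => ∑ j, ∑ i, (∑ k, Bc i k * d k * S k j) ^ 2 := funext key
  rw [hfun]
  exact hconv

theorem stmt_10 {p : ℕ} (α l : ℝ) (hα : α < 1) (hl : 0 ≤ l)
    (C : Matrix (Fin p) (Fin p) ℝ) (hC : C.IsSymm) (hCd : ∀ i, C i i = 1) :
    (∀ d : Fin p → ℝ, (∀ i, 0 < d i) →
      StrictConvexOn ℝ
        {R : Matrix (Fin p) (Fin p) ℝ | R.PosDef ∧ ∀ i, R i i = 1}
        (fun R =>
          -Real.log R.det - 2 * (1 - α) * Real.log ((Matrix.diagonal d).det)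
            + Matrix.trace (C * Matrix.diagonal d * R * Matrix.diagonal d)
            + l * ∑ i, ∑ j, (if i = j then 0 else |R i j|))) ∧
    (C.PosSemidef →
      ∀ R : Matrix (Fin p) (Fin p) ℝ, R.PosDef → (∀ i, R i i = 1) →
        StrictConvexOn ℝ
          {d : Fin p → ℝ | ∀ i, 0 < d i}
          (fun d =>
            -Real.log R.det - 2 * (1 - α) * Real.log ((Matrix.diagonal d).det)
              + Matrix.trace (C * Matrix.diagonal d * R * Matrix.diagonal d)
              + l * ∑ i, ∑ j, (if i = j then 0 else |R i j|))) := by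
  constructor
  · intro d _
    exact part1 α l hα hl C d
  · intro hCpsd R hR hRd
    have hc : 0 < 2 * (1 - α) := by linarith
    have hstrict := strict_neglogdiag (p := p) (2 * (1 - α)) hc
    have hq := convexOn_quad hCpsd hR
    have hconv : ConvexOn ℝ {d : Fin p → ℝ | ∀ i, 0 < d i}
        (fun d => Matrix.trace (C * Matrix.diagonal d * R * Matrix.diagonal d)
          + (-Real.log R.det + l * ∑ i, ∑ j, (if i = j then (0:ℝ) else |R i j|))) :=
      hq.add (convexOn_const _ convex_s2)
    have h := hstrict.add_convexOn hconv
    have hfun : (fun d : Fin p → ℝ =>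
        -Real.log R.det - 2 * (1 - α) * Real.log ((Matrix.diagonal d).det)
          + Matrix.trace (C * Matrix.diagonal d * R * Matrix.diagonal d)
          + l * ∑ i, ∑ j, (if i = j then (0:ℝ) else |R i j|))
        = (fun d => -(2 * (1 - α) * Real.log ((Matrix.diagonal d).det)))
          + (fun d => Matrix.trace (C * Matrix.diagonal d * R * Matrix.diagonal d)
            + (-Real.log R.det + l * ∑ i, ∑ j, (if i = j then (0:ℝ) else |R i j|))) := by
      funext d
      simp only [Pi.add_apply]
      ring
    rw [hfun]
    exact h
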